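/- For 0 < q < 1, the q-exponential E_q(z) = ∑_{n=0}^∞ q^(n(n-1)/2) z^n / [n]_q! satisfies E_q(-z) = ∏_{i=0}^∞ (1 - (1-q) q^i z), where [n]_q! = ∏_{k=1}^n (1-q^k)/(1-q). -/

import Mathlib

/-- `[n]_q!` : the q-factorial, `∏_{k=1}^n (1-q^k)/(1-q)`. -/
noncomputable def qFactorial (q : ℂ) (n : ℕ) : ℂ :=
  ∏ k ∈ Finset.range n, (1 - q ^ (k + 1)) / (1 - q)

/-- `E_q(z) = ∑ q^(n(n-1)/2) z^n / [n]_q!`. -/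
noncomputable def qExpE (q : ℂ) (z : ℂ) : ℂ :=
  ∑' n : ℕ, q ^ (n * (n - 1) / 2) * z ^ n / qFactorial q n

open Filter Finset Topology

/-- The summand of `qExpE q (-z)`. -/
noncomputable def Tq (q z : ℂ) (n : ℕ) : ℂ :=
  q ^ (n * (n - 1) / 2) * (-z) ^ n / qFactorial q n

/-- Auxiliary product `∏_{j<n} (1 - q^(N-j))`. -/
noncomputable def Gq (q : ℂ) (N n : ℕ) : ℂ :=
  ∏ j ∈ Finset.range n, (1 - q ^ (N - j))

lemma qFactorial_succ (q : ℂ) (n : ℕ) :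
    qFactorial q (n + 1) = qFactorial q n * ((1 - q ^ (n + 1)) / (1 - q)) :=
  Finset.prod_range_succ _ _

lemma qFactorial_ne_zero (q : ℂ) (hq : ∀ k : ℕ, 1 - q ^ (k + 1) ≠ 0)
    (hq1 : 1 - q ≠ 0) (n : ℕ) : qFactorial q n ≠ 0 := by
  unfold qFactorial
  exact Finset.prod_ne_zero_iff.2 fun k _ => div_ne_zero (hq k) hq1

lemma Tq_succ (q z : ℂ) (hq : ∀ k : ℕ, 1 - q ^ (k + 1) ≠ 0) (hq1 : 1 - q ≠ 0) (m : ℕ) :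
    (1 - q ^ (m + 1)) * Tq q z (m + 1) = q ^ m * (-z) * (1 - q) * Tq q z m := by
  have hfact := qFactorial_ne_zero q hq hq1
  have hd := hq m
  unfold Tq
  rw [qFactorial_succ, Nat.triangle_succ, pow_add, pow_succ]
  simp only [div_eq_mul_inv, mul_inv, inv_inv]
  linear_combination (q ^ (m * (m - 1) / 2) * q ^ m * ((-z) ^ m * (-z)) *
    (qFactorial q m)⁻¹ * (1 - q)) * (mul_inv_cancel₀ hd)

lemma Gq_succ (q : ℂ) (N n : ℕ) : Gq q N (n + 1) = Gq q N n * (1 - q ^ (N - n)) :=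
  Finset.prod_range_succ _ _

lemma Gq_succ_succ (q : ℂ) (N m : ℕ) :
    Gq q (N + 1) (m + 1) = (1 - q ^ (N + 1)) * Gq q N m := by
  unfold Gq
  rw [Finset.prod_range_succ']
  simp only [Nat.succ_sub_succ_eq_sub, Nat.sub_zero]
  ring

lemma Gq_zero_of_lt (q : ℂ) {N n : ℕ} (h : N < n) : Gq q N n = 0 := by
  refine Finset.prod_eq_zero (Finset.mem_range.2 h) ?_
  simp

/-- The finite q-binomial identity. -/
lemma key_identity (q z : ℂ) (hq : ∀ k : ℕ, 1 - q ^ (k + 1) ≠ 0) (hq1 : 1 - q ≠ 0) :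
    ∀ N : ℕ, ∏ i ∈ Finset.range N, (1 - (1 - q) * q ^ i * z)
      = ∑ n ∈ Finset.range (N + 1), Gq q N n * Tq q z n := by
  intro N
  induction N with
  | zero => simp [Gq, Tq, qFactorial]
  | succ N ih =>
    have hz : Gq q N (N + 1) * Tq q z (N + 1) = 0 := by
      rw [Gq_zero_of_lt q (Nat.lt_succ_self N), zero_mul]
    have hterm : ∀ m ∈ Finset.range (N + 1),
        Gq q (N + 1) (m + 1) * Tq q z (m + 1)
          = Gq q N (m + 1) * Tq q z (m + 1)
            - (1 - q) * q ^ N * z * (Gq q N m * Tq q z m) := by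
      intro m hm
      have hmN : m ≤ N := Nat.lt_succ_iff.1 (Finset.mem_range.1 hm)
      have e1 : q ^ (N - m) * q ^ (m + 1) = q ^ (N + 1) := by
        rw [← pow_add]; congr 1; omega
      have e2 : q ^ (N - m) * q ^ m = q ^ N := by
        rw [← pow_add]; congr 1; omega
      have h1 := Tq_succ q z hq hq1 m
      rw [Gq_succ_succ, Gq_succ, ← e1, ← e2]
      linear_combination (Gq q N m * q ^ (N - m)) * h1
    rw [Finset.prod_range_succ, ih]
    have h1 : ∑ n ∈ Finset.range (N + 2), Gq q N n * Tq q z n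
        = ∑ n ∈ Finset.range (N + 1), Gq q N n * Tq q z n := by
      rw [Finset.sum_range_succ (fun n => Gq q N n * Tq q z n) (N + 1), hz, add_zero]
    have h2 := Finset.sum_range_succ' (fun n => Gq q N n * Tq q z n) (N + 1)
    have h3 := Finset.sum_range_succ' (fun n => Gq q (N + 1) n * Tq q z n) (N + 1)
    have h4 := Finset.sum_congr rfl hterm
    have h5 : ∑ m ∈ Finset.range (N + 1),
        (Gq q N (m + 1) * Tq q z (m + 1)
          - (1 - q) * q ^ N * z * (Gq q N m * Tq q z m))
        = (∑ m ∈ Finset.range (N + 1), Gq q N (m + 1) * Tq q z (m + 1))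
          - ∑ m ∈ Finset.range (N + 1), (1 - q) * q ^ N * z * (Gq q N m * Tq q z m) :=
      Finset.sum_sub_distrib _ _
    have h6 : ∑ m ∈ Finset.range (N + 1), (1 - q) * q ^ N * z * (Gq q N m * Tq q z m)
        = (1 - q) * q ^ N * z * ∑ m ∈ Finset.range (N + 1), Gq q N m * Tq q z m :=
      (Finset.mul_sum _ _ _).symm
    have h7 : Gq q (N + 1) 0 * Tq q z 0 = Gq q N 0 * Tq q z 0 := by simp [Gq]
    linear_combination -h1 + h2 - h3 - h4 - h5 + h6 - h7

theorem qExpE_eq_tprod (q : ℝ) (hq0 : 0 < q) (hq1 : q < 1) (z : ℂ) :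
    qExpE (q : ℂ) (-z) = ∏' i : ℕ, (1 - (1 - (q : ℂ)) * (q : ℂ) ^ i * z) := by
  set Q : ℂ := (q : ℂ) with hQdef
  have hQnorm : ‖Q‖ = q := by
    simp [hQdef, Complex.norm_real, abs_of_pos hq0]
  have hqk_lt : ∀ k : ℕ, q ^ (k + 1) < 1 := fun k =>
    pow_lt_one₀ hq0.le hq1 (Nat.succ_ne_zero k)
  have hfac : ∀ k : ℕ, 1 - Q ^ (k + 1) ≠ 0 := by
    intro k
    have : (1 : ℂ) - Q ^ (k + 1) = ((1 - q ^ (k + 1) : ℝ) : ℂ) := by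
      push_cast [hQdef]; ring
    rw [this]
    exact_mod_cast ne_of_gt (by linarith [hqk_lt k] : (0:ℝ) < 1 - q ^ (k + 1))
  have hq1' : (1 : ℂ) - Q ≠ 0 := by
    have : (1 : ℂ) - Q = ((1 - q : ℝ) : ℂ) := by push_cast [hQdef]; ring
    rw [this]
    exact_mod_cast ne_of_gt (by linarith : (0:ℝ) < 1 - q)
  -- the summands
  set T : ℕ → ℂ := Tq Q z with hTdef
  -- norm of 1 - Q^k for any k
  have hnorm_one_sub : ∀ k : ℕ, ‖(1 : ℂ) - Q ^ k‖ = 1 - q ^ k := by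
    intro k
    have : (1 : ℂ) - Q ^ k = ((1 - q ^ k : ℝ) : ℂ) := by push_cast [hQdef]; ring
    rw [this, Complex.norm_real, Real.norm_eq_abs, abs_of_nonneg]
    have : q ^ k ≤ 1 := pow_le_one₀ hq0.le hq1.le
    linarith
  -- summability of ‖T n‖
  have hTnorm_succ : ∀ m : ℕ,
      ‖T (m + 1)‖ * (1 - q ^ (m + 1)) = q ^ m * ‖z‖ * (1 - q) * ‖T m‖ := by
    intro m
    have h := Tq_succ Q z hfac hq1' m
    have := congrArg norm h
    rw [norm_mul, hnorm_one_sub (m + 1)] at this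
    rw [mul_comm] at this
    rw [this]
    have h1Q : ‖(1 : ℂ) - Q‖ = 1 - q := by simpa using hnorm_one_sub 1
    simp only [norm_mul, norm_pow, norm_neg, hQnorm, h1Q]
    rfl
  have hTsummable : Summable fun n => ‖T n‖ := by
    apply summable_of_ratio_norm_eventually_le (r := 1/2) (by norm_num)
    have hto : Tendsto (fun m : ℕ => q ^ m * ‖z‖) atTop (𝓝 0) := by
      simpa using (tendsto_pow_atTop_nhds_zero_of_norm_lt_one
        (by rwa [Real.norm_eq_abs, abs_of_pos hq0])).mul_const ‖z‖
    filter_upwards [hto.eventually_le_const (by norm_num : (0:ℝ) < 1/2)] with m hm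
    have hd : (0:ℝ) < 1 - q ^ (m + 1) := by linarith [hqk_lt m]
    have hd2 : (1:ℝ) - q ≤ 1 - q ^ (m + 1) := by
      have : q ^ (m + 1) ≤ q := by
        calc q ^ (m + 1) ≤ q ^ 1 := pow_le_pow_of_le_one hq0.le hq1.le (by omega)
        _ = q := pow_one q
      linarith
    have heq := hTnorm_succ m
    have hTm : (0:ℝ) ≤ ‖T m‖ := norm_nonneg _
    rw [Real.norm_eq_abs, Real.norm_eq_abs, abs_of_nonneg (norm_nonneg _),
      abs_of_nonneg (norm_nonneg _)]
    refine le_of_mul_le_mul_right ?_ hd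
    have hmul : q ^ m * ‖z‖ * (1 - q) ≤ 1 / 2 * (1 - q ^ (m + 1)) :=
      mul_le_mul hm hd2 (by linarith) (by norm_num)
    have h2 := mul_le_mul_of_nonneg_right hmul hTm
    nlinarith [h2, heq]
  -- the truncated double sequence
  set F : ℕ → ℕ → ℂ := fun N n => if n ≤ N then Gq Q N n * T n else 0 with hFdef
  -- pointwise limits
  have hpt : ∀ n : ℕ, Tendsto (fun N => F N n) atTop (𝓝 (T n)) := by
    intro n
    have hG : Tendsto (fun N => Gq Q N n) atTop (𝓝 1) := by
      have : Tendsto (fun N => ∏ j ∈ Finset.range n, (1 - Q ^ (N - j))) atTop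
          (𝓝 (∏ j ∈ Finset.range n, (1 : ℂ))) := by
        apply tendsto_finset_prod
        intro j _
        have h0 : Tendsto (fun N : ℕ => Q ^ (N - j)) atTop (𝓝 0) :=
          (tendsto_pow_atTop_nhds_zero_of_norm_lt_one
            (by rw [hQnorm]; exact hq1)).comp (tendsto_sub_atTop_nat j)
        simpa using tendsto_const_nhds.sub h0
      simpa [Gq] using this
    have hmain : Tendsto (fun N => Gq Q N n * T n) atTop (𝓝 (T n)) := by
      simpa using hG.mul_const (T n)
    refine hmain.congr' ?_
    filter_upwards [eventually_ge_atTop n] with N hN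
    simp [hFdef, hN]
  -- the uniform bound
  have hbound : ∀ N n, ‖F N n‖ ≤ ‖T n‖ := by
    intro N n
    by_cases h : n ≤ N
    · simp only [hFdef, if_pos h, norm_mul]
      have hGle : ‖Gq Q N n‖ ≤ 1 := by
        rw [Gq, norm_prod]
        apply Finset.prod_le_one
        · intro j _; exact norm_nonneg _
        · intro j _
          rw [hnorm_one_sub]
          have : (0:ℝ) ≤ q ^ (N - j) := pow_nonneg hq0.le _
          linarith
      calc ‖Gq Q N n‖ * ‖T n‖ ≤ 1 * ‖T n‖ :=
            mul_le_mul_of_nonneg_right hGle (norm_nonneg _)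
        _ = ‖T n‖ := one_mul _
    · simp [hFdef, if_neg h, norm_nonneg]
  -- the partial sums are tsum of F
  have htsumF : ∀ N, ∑' n, F N n = ∑ n ∈ Finset.range (N + 1), Gq Q N n * T n := by
    intro N
    have h0 : ∀ n ∉ Finset.range (N + 1), F N n = 0 := by
      intro n hn
      have hn' : ¬ n ≤ N := by simpa [Nat.lt_succ_iff] using hn
      simp [hFdef, hn']
    rw [tsum_eq_sum h0]
    refine Finset.sum_congr rfl fun n hn => ?_
    simp [hFdef, Nat.lt_succ_iff.1 (Finset.mem_range.1 hn)]
  -- dominated convergence for the sums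
  have hS : Tendsto (fun N => ∑' n, F N n) atTop (𝓝 (∑' n, T n)) := by
    refine tendsto_tsum_of_dominated_convergence hTsummable hpt ?_
    exact Filter.Eventually.of_forall hbound
  -- multipliability of the factors
  set f : ℕ → ℂ := fun i => 1 - (1 - Q) * Q ^ i * z with hfdef
  have hMult : Multipliable f := by
    by_cases hzero : ∃ i, f i = 0
    · obtain ⟨i0, hi0⟩ := hzero
      refine ⟨0, ?_⟩
      rw [HasProd]
      refine tendsto_const_nhds.congr' ?_
      filter_upwards [Filter.eventually_ge_atTop ({i0} : Finset ℕ)] with s hs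
      exact (Finset.prod_eq_zero (hs (Finset.mem_singleton_self i0)) hi0).symm
    · push_neg at hzero
      have := Complex.multipliable_of_summable_log (f := f) ?_
      · exact this
      · 
        have hgeo : Summable fun i : ℕ => 3 / 2 * ((1 - q) * ‖z‖) * q ^ i :=
          (summable_geometric_of_lt_one hq0.le hq1).mul_left _
        refine hgeo.of_norm_bounded_eventually_nat ?_
        have hnormc : ∀ i : ℕ, ‖-((1 - Q) * Q ^ i * z)‖ = (1 - q) * ‖z‖ * q ^ i := by
          intro i
          have h1Q : ‖(1 : ℂ) - Q‖ = 1 - q := by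
            simpa using hnorm_one_sub 1
          rw [norm_neg, norm_mul, norm_mul, h1Q, norm_pow, hQnorm]
          ring
        have hto : Tendsto (fun i : ℕ => (1 - q) * ‖z‖ * q ^ i) atTop (𝓝 0) := by
          simpa using (tendsto_pow_atTop_nhds_zero_of_norm_lt_one
            (x := q) (by rwa [Real.norm_eq_abs, abs_of_pos hq0])).const_mul ((1 - q) * ‖z‖)
        filter_upwards [hto.eventually_le_const (by norm_num : (0:ℝ) < 1/2)] with i hi
        have hfi : f i = 1 + -((1 - Q) * Q ^ i * z) := by rw [hfdef]; ring
        rw [hfi]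
        calc ‖Complex.log (1 + -((1 - Q) * Q ^ i * z))‖
            ≤ 3 / 2 * ‖-((1 - Q) * Q ^ i * z)‖ :=
              Complex.norm_log_one_add_half_le_self (by rw [hnormc]; exact hi)
          _ = 3 / 2 * ((1 - q) * ‖z‖) * q ^ i := by rw [hnormc]; ring
  -- partial products converge to the tprod
  have hP : Tendsto (fun N => ∏ i ∈ Finset.range N, f i) atTop (𝓝 (∏' i, f i)) :=
    hMult.hasProd.tendsto_prod_nat
  -- the two sequences agree
  have hkey : ∀ N, ∏ i ∈ Finset.range N, f i = ∑' n, F N n := by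
    intro N
    rw [htsumF N]
    exact key_identity Q z hfac hq1' N
  have hP' : Tendsto (fun N => ∑' n, F N n) atTop (𝓝 (∏' i, f i)) := by
    refine hP.congr fun N => hkey N
  have hfinal : (∑' n, T n) = ∏' i, f i := tendsto_nhds_unique hS hP'
  have hE : qExpE Q (-z) = ∑' n, T n := rfl
  rw [hE, hfinal]
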